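/- Let A : (0,∞) → ℝ be twice continuously differentiable with A''(y) + (y²/16) A(y) = (y/4) A(y)³ − (3/16) A(y)⁵ for all y > 0. Define E₃(y) = (1/2) A'(y)² + (y²/32) A(y)² − (y/16) A(y)⁴ + (1/32) A(y)⁶ and E₄(y) = E₃(y)/y + A(y) A'(y)/(2 y²) + A(y)²/(2 y³). Then for every y > 0, E₄ is differentiable with E₄'(y) = −A(y)⁶/(8 y²) + A(y)⁴/(8 y) − 3 A(y)²/(2 y⁴); in particular E₄'(y) ≤ A(y)⁴/(8 y) for all y > 0. -/

import Mathlib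

/-- For a C² solution of the amplitude equation
`A'' + (y²/16) A = (y/4) A³ − (3/16) A⁵` on `(0,∞)`, the modified energy
`E₄ = E₃/y + A A'/(2y²) + A²/(2y³)` (with `E₃ = (1/2) A'² + (y²/32) A² − (y/16) A⁴ +
(1/32) A⁶`) has derivative `−A⁶/(8y²) + A⁴/(8y) − 3A²/(2y⁴)` at each `y > 0`; in
particular this derivative is at most `A⁴/(8y)`. -/
theorem stmt_14 (A : ℝ → ℝ) (hA : ContDiffOn ℝ 2 A (Set.Ioi (0 : ℝ)))
    (hODE : ∀ y : ℝ, 0 < y →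
      deriv (deriv A) y + y ^ 2 / 16 * A y = y / 4 * A y ^ 3 - 3 / 16 * A y ^ 5) :
    ∀ y : ℝ, 0 < y →
      HasDerivAt
        (fun z : ℝ =>
          (1 / 2 * deriv A z ^ 2 + z ^ 2 / 32 * A z ^ 2 - z / 16 * A z ^ 4
            + 1 / 32 * A z ^ 6) / z
          + A z * deriv A z / (2 * z ^ 2) + A z ^ 2 / (2 * z ^ 3))
        (-(A y ^ 6) / (8 * y ^ 2) + A y ^ 4 / (8 * y) - 3 * A y ^ 2 / (2 * y ^ 4)) y ∧
      -(A y ^ 6) / (8 * y ^ 2) + A y ^ 4 / (8 * y) - 3 * A y ^ 2 / (2 * y ^ 4)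
        ≤ A y ^ 4 / (8 * y) := by
  intro y hy
  have hyne : y ≠ 0 := ne_of_gt hy
  have hmem : Set.Ioi (0:ℝ) ∈ nhds y := isOpen_Ioi.mem_nhds hy
  have hdA1 : ContDiffOn ℝ 1 (deriv A) (Set.Ioi (0:ℝ)) :=
    hA.deriv_of_isOpen isOpen_Ioi (by norm_num)
  have hAy : HasDerivAt A (deriv A y) y := by
    have := (hA.contDiffAt hmem).differentiableAt (by norm_num)
    exact this.hasDerivAt
  have hdAy : HasDerivAt (deriv A) (deriv (deriv A) y) y := by
    have := (hdA1.contDiffAt hmem).differentiableAt (by norm_num)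
    exact this.hasDerivAt
  set a := A y
  set b := deriv A y
  set c := deriv (deriv A) y
  have hode : c = y / 4 * a ^ 3 - 3 / 16 * a ^ 5 - y ^ 2 / 16 * a := by
    have := hODE y hy; linarith
  have hid : HasDerivAt (fun z : ℝ => z) 1 y := hasDerivAt_id y
  have h1 : HasDerivAt (fun z : ℝ =>
      1 / 2 * deriv A z ^ 2 + z ^ 2 / 32 * A z ^ 2 - z / 16 * A z ^ 4 + 1 / 32 * A z ^ 6)
      (1 / 2 * (2 * b * c) + ((2 * y * 1) / 32 * a ^ 2 + y ^ 2 / 32 * (2 * a * b))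
        - (1 / 16 * a ^ 4 + y / 16 * (4 * a ^ 3 * b)) + 1 / 32 * (6 * a ^ 5 * b)) y := by
    exact ((((hdAy.pow 2).const_mul (1/2 : ℝ)).add
      (((hid.pow 2).div_const 32).mul (hAy.pow 2))).sub
      ((hid.div_const 16).mul (hAy.pow 4))).add ((hAy.pow 6).const_mul (1/32 : ℝ)) |>.congr_deriv
      (by simp only [Pi.pow_apply, a, b]; ring)
  have h2 := ((h1.div hid hyne).add
      ((hAy.mul hdAy).div ((hid.pow 2).const_mul 2) (by simp [hyne]))).add
      ((hAy.pow 2).div ((hid.pow 3).const_mul 2) (by simp [hyne]))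
  constructor
  · refine h2.congr_deriv ?_
    simp only [Pi.pow_apply, Pi.mul_apply]
    push_cast
    rw [hode]
    simp only [a, b]
    field_simp
    ring
  · have : -(a ^ 6) / (8 * y ^ 2) ≤ 0 := by
      apply div_nonpos_of_nonpos_of_nonneg
      · exact neg_nonpos.mpr (by positivity)
      · positivity
    have h3 : 3 * a ^ 2 / (2 * y ^ 4) ≥ 0 := by positivity
    linarith
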